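/- Let s ≥ 2 be an integer with Euler totient m = φ(s), and let r₁,...,r_m be the integers in [1,s] coprime to s. Set A_s(k) = (r₁/s)_k ··· (r_m/s)_k / (k!)^m where (x)_k is the Pochhammer symbol. Then with N_s = s^m · ∏_{p | s} p^{m/(p-1)}, the number N_s^k · A_s(k) is an integer for every k ≥ 0. -/

import Mathlib

open Finset

private lemma asc_eval_prod (k : ℕ) (x : ℚ) :
    (ascPochhammer ℚ k).eval x = ∏ j ∈ Finset.range k, (x + j) := by
  induction k with
  | zero => simp [ascPochhammer_zero]
  | succ n ih =>
      rw [ascPochhammer_succ_right, Finset.prod_range_succ, ← ih]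
      simp [Polynomial.eval_mul]

private lemma card_filter_coprime (s : ℕ) (hs : 2 ≤ s) :
    ((Finset.Icc 1 s).filter (fun r => Nat.Coprime r s)).card = s.totient := by
  rw [Nat.totient]
  congr 1
  ext r
  simp only [mem_filter, mem_Icc, mem_range]
  constructor
  · rintro ⟨⟨h1, h2⟩, hc⟩
    refine ⟨lt_of_le_of_ne h2 ?_, hc.symm⟩
    rintro rfl
    simp only [Nat.Coprime, Nat.gcd_self] at hc
    omega
  · rintro ⟨h1, hc⟩
    have hr : r ≠ 0 := by
      rintro rfl
      have := Nat.coprime_zero_right s |>.mp hc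
      omega
    exact ⟨⟨by omega, by omega⟩, hc.symm⟩

/-- counting lemma: in an AP `r + j*s`, `j < k`, at least `k / Q` terms divisible by `Q`
when `gcd(Q,s)=1`. -/
private lemma count_row (Q s r k : ℕ) (hQ : 2 ≤ Q) (hco : Nat.Coprime s Q) :
    k / Q ≤ ((Finset.range k).filter (fun j => Q ∣ r + j * s)).card := by
  have : NeZero Q := ⟨by omega⟩
  set u : (ZMod Q)ˣ := ZMod.unitOfCoprime s hco with hu
  set j0 : ℕ := ((-(r : ZMod Q)) * (↑u⁻¹ : ZMod Q)).val with hj0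
  have hj0lt : j0 < Q := ZMod.val_lt _
  have hdvd : ∀ t : ℕ, Q ∣ r + (j0 + t * Q) * s := by
    intro t
    have : ((r + (j0 + t * Q) * s : ℕ) : ZMod Q) = 0 := by
      push_cast
      rw [ZMod.natCast_val, ZMod.cast_id]
      have hs' : (s : ZMod Q) = (u : ZMod Q) := (ZMod.coe_unitOfCoprime s hco).symm
      rw [ZMod.natCast_self, hs']
      have huu : ((↑u⁻¹ : ZMod Q) * (u : ZMod Q)) = 1 := by
        rw [← Units.val_mul]; simp
      linear_combination (-(r : ZMod Q)) * huu
    exact (ZMod.natCast_eq_zero_iff _ _).mp this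
  have hinj : Set.InjOn (fun t => j0 + t * Q) (Finset.range (k / Q)) := by
    intro a _ b _ hab
    simp only at hab
    exact Nat.eq_of_mul_eq_mul_right (by omega) (Nat.add_left_cancel hab)
  have hmaps : ∀ t ∈ Finset.range (k / Q),
      (j0 + t * Q) ∈ (Finset.range k).filter (fun j => Q ∣ r + j * s) := by
    intro t ht
    simp only [mem_range] at ht
    refine mem_filter.mpr ⟨mem_range.mpr ?_, hdvd t⟩
    calc j0 + t * Q < Q + t * Q := Nat.add_lt_add_right hj0lt _
      _ = (t + 1) * Q := by ring
      _ ≤ (k / Q) * Q := Nat.mul_le_mul_right _ (by omega)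
      _ ≤ k := Nat.div_mul_le_self k Q
  calc k / Q = (Finset.range (k / Q)).card := (Finset.card_range _).symm
    _ ≤ _ := Finset.card_le_card_of_injOn _ hmaps hinj

private lemma factorization_eq_card_pow_dvd (q n B : ℕ) (hq : q.Prime) (hn : n ≠ 0)
    (hB : n < q ^ B) :
    n.factorization q = ((Finset.Ico 1 B).filter (fun i => q ^ i ∣ n)).card := by
  have hvB : n.factorization q < B := by
    by_contra h
    push_neg at h
    have hd : q ^ B ∣ n :=
      (Nat.Prime.pow_dvd_iff_le_factorization hq hn).mpr h
    exact absurd (Nat.le_of_dvd (Nat.pos_of_ne_zero hn) hd) (by omega)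
  have hset : (Finset.Ico 1 B).filter (fun i => q ^ i ∣ n)
      = Finset.Icc 1 (n.factorization q) := by
    ext i
    simp only [mem_filter, mem_Ico, mem_Icc,
      Nat.Prime.pow_dvd_iff_le_factorization hq hn]
    omega
  rw [hset, Nat.card_Icc]
  omega

/-- Row valuation lemma: for prime `q` not dividing `s`,
`v_q(k!) ≤ v_q(∏_{j<k} (r + j*s))`. -/
private lemma row_val (q s r k : ℕ) (hq : q.Prime) (hqs : ¬ q ∣ s) (hr : 1 ≤ r) :
    (k.factorial).factorization q ≤
      (∏ j ∈ Finset.range k, (r + j * s)).factorization q := by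
  haveI : Fact q.Prime := ⟨hq⟩
  set B : ℕ := (r + k * s) + Nat.log q k + 1 with hB
  have hlog : Nat.log q k < B := by omega
  have hbound : ∀ j ∈ Finset.range k, r + j * s < q ^ B := by
    intro j hj
    simp only [mem_range] at hj
    have h1 : r + j * s ≤ r + k * s := by
      have : j * s ≤ k * s := Nat.mul_le_mul_right _ (by omega)
      omega
    have h2 : r + k * s < q ^ (r + k * s) :=
      Nat.lt_pow_self hq.one_lt
    have h3 : q ^ (r + k * s) ≤ q ^ B :=
      Nat.pow_le_pow_right hq.pos (by omega)
    omega
  have hne : ∀ j ∈ Finset.range k, r + j * s ≠ 0 := fun j _ => by positivity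
  rw [Nat.factorization_def _ hq, padicValNat_factorial hlog]
  rw [Nat.factorization_prod hne]
  rw [Finsupp.finset_sum_apply]
  have hcount : ∀ j ∈ Finset.range k,
      (r + j * s).factorization q
        = ((Finset.Ico 1 B).filter (fun i => q ^ i ∣ r + j * s)).card := by
    intro j hj
    exact factorization_eq_card_pow_dvd q _ B hq (hne j hj) (hbound j hj)
  rw [Finset.sum_congr rfl hcount]
  -- double counting
  have hswap : ∑ j ∈ Finset.range k,
      ((Finset.Ico 1 B).filter (fun i => q ^ i ∣ r + j * s)).card
      = ∑ i ∈ Finset.Ico 1 B,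
        ((Finset.range k).filter (fun j => q ^ i ∣ r + j * s)).card := by
    simp only [Finset.card_filter]
    exact Finset.sum_comm
  rw [hswap]
  apply Finset.sum_le_sum
  intro i hi
  simp only [mem_Ico] at hi
  have hQ2 : 2 ≤ q ^ i := by
    calc 2 ≤ q := hq.two_le
      _ = q ^ 1 := (pow_one q).symm
      _ ≤ q ^ i := Nat.pow_le_pow_right hq.pos hi.1
  have hco : Nat.Coprime s (q ^ i) :=
    (Nat.coprime_comm.mp ((hq.coprime_iff_not_dvd.mpr hqs))).pow_right _
  exact count_row (q ^ i) s r k hQ2 hco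

private lemma sub_one_dvd_totient (s q : ℕ) (hs : 2 ≤ s) (hq : q.Prime) (hqs : q ∣ s) :
    (q - 1) ∣ s.totient := by
  have hs0 : s ≠ 0 := by omega
  have ha : 0 < s.factorization q := hq.factorization_pos_of_dvd hs0 hqs
  set a := s.factorization q
  have hsplit : s = q ^ a * (s / q ^ a) := (Nat.ordProj_mul_ordCompl_eq_self s q).symm
  have hcop : Nat.Coprime (q ^ a) (s / q ^ a) :=
    (Nat.coprime_ordCompl hq hs0).pow_left _
  rw [hsplit, Nat.totient_mul hcop, Nat.totient_prime_pow hq ha]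
  exact ⟨q ^ (a - 1) * (s / q ^ a).totient, by ring⟩

private lemma val_factorial_le (q k : ℕ) (hq : q.Prime) :
    (q - 1) * (k.factorial).factorization q ≤ k := by
  haveI : Fact q.Prime := ⟨hq⟩
  rw [Nat.factorization_def _ hq, sub_one_mul_padicValNat_factorial]
  omega

/-- The main divisibility. -/
private lemma main_dvd (s k : ℕ) (hs : 2 ≤ s) :
    (k.factorial ^ s.totient) ∣
      (∏ p ∈ s.primeFactors, p ^ (s.totient / (p - 1))) ^ k *
        ∏ r ∈ (Finset.Icc 1 s).filter (fun r => Nat.Coprime r s),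
          ∏ j ∈ Finset.range k, (r + j * s) := by
  set S := (Finset.Icc 1 s).filter (fun r => Nat.Coprime r s) with hS
  set m := s.totient with hm
  have hr1 : ∀ r ∈ S, 1 ≤ r := by
    intro r hr
    simp only [hS, mem_filter, mem_Icc] at hr
    exact hr.1.1
  have hrowne : ∀ r ∈ S, (∏ j ∈ Finset.range k, (r + j * s)) ≠ 0 := by
    intro r hr
    apply Finset.prod_ne_zero_iff.mpr
    intro j _
    have := hr1 r hr
    omega
  have hRHSne : (∏ p ∈ s.primeFactors, p ^ (m / (p - 1))) ^ k *
      (∏ r ∈ S, ∏ j ∈ Finset.range k, (r + j * s)) ≠ 0 := by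
    apply mul_ne_zero
    · apply pow_ne_zero
      apply Finset.prod_ne_zero_iff.mpr
      intro p hp
      exact pow_ne_zero _ (Nat.Prime.ne_zero (Nat.prime_of_mem_primeFactors hp))
    · exact Finset.prod_ne_zero_iff.mpr hrowne
  rw [← Nat.factorization_le_iff_dvd (pow_ne_zero _ k.factorial_ne_zero) hRHSne]
  intro q
  rcases em q.Prime with hq | hq
  swap
  · simp [Nat.factorization_eq_zero_of_not_prime _ hq]
  -- q prime
  have hfactpow : ((k.factorial ^ m).factorization) q
      = m * (k.factorial).factorization q := by
    rw [Nat.factorization_pow]; simp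
  rw [hfactpow]
  have hQne : (∏ p ∈ s.primeFactors, p ^ (m / (p - 1))) ≠ 0 := by
    apply Finset.prod_ne_zero_iff.mpr
    intro p hp
    exact pow_ne_zero _ (Nat.Prime.ne_zero (Nat.prime_of_mem_primeFactors hp))
  have hPne : (∏ r ∈ S, ∏ j ∈ Finset.range k, (r + j * s)) ≠ 0 :=
    Finset.prod_ne_zero_iff.mpr hrowne
  rw [Nat.factorization_mul (pow_ne_zero _ hQne) hPne]
  simp only [Finsupp.add_apply]
  rw [Nat.factorization_pow]
  simp only [Finsupp.smul_apply, smul_eq_mul]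
  rcases em (q ∣ s) with hqs | hqs
  · -- q divides s
    have hqmem : q ∈ s.primeFactors :=
      Nat.mem_primeFactors.mpr ⟨hq, hqs, by omega⟩
    have hQval : (∏ p ∈ s.primeFactors, p ^ (m / (p - 1))).factorization q
        = m / (q - 1) := by
      rw [Nat.factorization_prod (fun p hp => pow_ne_zero _
        (Nat.Prime.ne_zero (Nat.prime_of_mem_primeFactors hp)))]
      rw [Finsupp.finset_sum_apply]
      rw [Finset.sum_eq_single q]
      · rw [Nat.factorization_pow]
        simp [hq.factorization]
      · intro p hp hpq
        rw [Nat.factorization_pow]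
        have hpp := Nat.prime_of_mem_primeFactors hp
        simp [hpp.factorization, Finsupp.single_apply, hpq]
      · intro h; exact absurd hqmem h
    rw [hQval]
    have hdvdtot : (q - 1) ∣ m := sub_one_dvd_totient s q hs hq hqs
    have hkey : m * (k.factorial).factorization q ≤ k * (m / (q - 1)) := by
      obtain ⟨t, ht⟩ := hdvdtot
      have hq1 : 1 ≤ q - 1 := by have := hq.two_le; omega
      rw [ht, Nat.mul_div_cancel_left t (by omega)]
      have h1 := val_factorial_le q k hq
      calc (q - 1) * t * (k.factorial).factorization q
          = t * ((q - 1) * (k.factorial).factorization q) := by ring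
        _ ≤ t * k := Nat.mul_le_mul_left t h1
        _ = k * t := by ring
    omega
  · -- q does not divide s
    have hrow : ∀ r ∈ S, (k.factorial).factorization q ≤
        (∏ j ∈ Finset.range k, (r + j * s)).factorization q := by
      intro r hr
      exact row_val q s r k hq hqs (hr1 r hr)
    have hPval : m * (k.factorial).factorization q ≤
        (∏ r ∈ S, ∏ j ∈ Finset.range k, (r + j * s)).factorization q := by
      rw [Nat.factorization_prod hrowne, Finsupp.finset_sum_apply]
      calc m * (k.factorial).factorization q
          = S.card * (k.factorial).factorization q := by
            rw [card_filter_coprime s hs]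
        _ ≤ ∑ r ∈ S, (∏ j ∈ Finset.range k, (r + j * s)).factorization q := by
            have := Finset.card_nsmul_le_sum S
              (fun r => (∏ j ∈ Finset.range k, (r + j * s)).factorization q)
              (k.factorial.factorization q) hrow
            simpa [smul_eq_mul] using this
    omega

theorem zudilin_integrality (s : ℕ) (hs : 2 ≤ s) (k : ℕ) :
    ∃ z : ℤ,
      ((s ^ s.totient * ∏ p ∈ s.primeFactors, p ^ (s.totient / (p - 1)) : ℕ) : ℚ) ^ k *
        ((∏ r ∈ (Finset.Icc 1 s).filter (fun r => Nat.Coprime r s),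
            (ascPochhammer ℚ k).eval ((r : ℚ) / (s : ℚ))) /
          ((k.factorial : ℚ)) ^ s.totient) = (z : ℚ) := by
  set S := (Finset.Icc 1 s).filter (fun r => Nat.Coprime r s) with hS
  set m := s.totient with hm
  set Q := ∏ p ∈ s.primeFactors, p ^ (m / (p - 1)) with hQ
  set P := ∏ r ∈ S, ∏ j ∈ Finset.range k, (r + j * s) with hP
  have hs0 : (s : ℚ) ≠ 0 := by positivity
  have hcard : S.card = m := card_filter_coprime s hs
  -- evaluate the Pochhammer product
  have hpoch : ∀ r ∈ S, (ascPochhammer ℚ k).eval ((r : ℚ) / (s : ℚ))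
      = (∏ j ∈ Finset.range k, ((r + j * s : ℕ) : ℚ)) / (s : ℚ) ^ k := by
    intro r hr
    rw [asc_eval_prod]
    rw [eq_div_iff (by positivity)]
    rw [show ((s : ℚ)) ^ k = ∏ _j ∈ Finset.range k, (s : ℚ) by
      simp [Finset.prod_const]]
    rw [← Finset.prod_mul_distrib]
    apply Finset.prod_congr rfl
    intro j _
    push_cast
    field_simp
  have hprod : (∏ r ∈ S, (ascPochhammer ℚ k).eval ((r : ℚ) / (s : ℚ)))
      = (P : ℚ) / (s : ℚ) ^ (m * k) := by
    rw [Finset.prod_congr rfl hpoch, Finset.prod_div_distrib, Finset.prod_const,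
      hcard, ← pow_mul, mul_comm k m]
    congr 1
    rw [hP]
    push_cast
    rfl
  obtain ⟨c, hc⟩ := main_dvd s k hs
  refine ⟨(c : ℤ), ?_⟩
  have hfact : ((k.factorial : ℚ)) ^ m ≠ 0 := by positivity
  have hspow : ((s : ℚ)) ^ (m * k) ≠ 0 := by positivity
  have hcast : (Q : ℚ) ^ k * (P : ℚ) = (k.factorial : ℚ) ^ m * (c : ℚ) := by
    exact_mod_cast congrArg (fun n : ℕ => (n : ℚ)) hc
  rw [hprod]
  have hQP : ((s ^ m * Q : ℕ) : ℚ) = (s : ℚ) ^ m * (Q : ℚ) := by push_cast; ring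
  rw [hQP]
  have hsp : ((s : ℚ) ^ m * (Q : ℚ)) ^ k = (s : ℚ) ^ (m * k) * (Q : ℚ) ^ k := by
    rw [mul_pow, ← pow_mul]
  rw [hsp]
  push_cast
  field_simp
  linear_combination hcast
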